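/- Let X be a finite subset of ℝ^d of full rank (i.e., not contained in any affine hyperplane of dimension less than d). Then |X + X| ≥ (d + 1)|X| − (d+1)d/2. -/

import Mathlib

open Classical Pointwise
open Module Set Submodule

variable {d : ℕ}

lemma exists_extreme (X : Finset (Fin d → ℝ)) (hX : X.Nonempty) :
    ∃ v ∈ X, v ∉ convexHull ℝ (↑(X.erase v) : Set (Fin d → ℝ)) := by
  classical
  obtain ⟨x, hx⟩ := hX
  obtain ⟨v, hv⟩ := (X.finite_toSet.isCompact_convexHull ℝ).extremePoints_nonempty
    ⟨x, subset_convexHull ℝ _ hx⟩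
  have hvX : v ∈ X := extremePoints_convexHull_subset hv
  refine ⟨v, hvX, fun hmem => ?_⟩
  have h2 := (convex_convexHull ℝ (↑X : Set (Fin d → ℝ))).mem_extremePoints_iff_mem_diff_convexHull_diff.1 hv
  refine h2.2 (convexHull_mono ?_ hmem)
  intro y hy
  simp only [Finset.coe_erase, Set.mem_diff, Set.mem_singleton_iff] at hy ⊢
  exact ⟨subset_convexHull ℝ _ hy.1, hy.2⟩

lemma span_shift {s : Set (Fin d → ℝ)} {x : Fin d → ℝ} (hx : x ∈ affineSpan ℝ s) :
    span ℝ (-x +ᵥ s) = vectorSpan ℝ s := by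
  apply le_antisymm
  · rw [Submodule.span_le]
    rintro w hw
    obtain ⟨y, hy, rfl⟩ := hw
    have : y -ᵥ x ∈ (affineSpan ℝ s).direction :=
      AffineSubspace.vsub_mem_direction (mem_affineSpan ℝ hy) hx
    rw [direction_affineSpan] at this
    simpa [neg_add_eq_sub] using this
  · rw [vectorSpan_def, Submodule.span_le]
    rintro w ⟨y, hy, z, hz, rfl⟩
    have h1 : (-x + y : Fin d → ℝ) ∈ (-x +ᵥ s) := Set.vadd_mem_vadd_set hy
    have h2 : (-x + z : Fin d → ℝ) ∈ (-x +ᵥ s) := Set.vadd_mem_vadd_set hz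
    have := sub_mem (Submodule.subset_span (R := ℝ) h1) (Submodule.subset_span h2)
    simpa using this

lemma good_card (X' : Finset (Fin d → ℝ)) {v : Fin d → ℝ}
    (hv : v ∉ convexHull ℝ (↑X' : Set (Fin d → ℝ)))
    (hsp : v ∈ affineSpan ℝ (↑X' : Set (Fin d → ℝ))) :
    finrank ℝ (vectorSpan ℝ (↑X' : Set (Fin d → ℝ))) ≤
      (X'.filter (fun y => IsVisible ℝ (convexHull ℝ (↑X' : Set (Fin d → ℝ))) v y)).card := by
  classical
  have hclosed : IsClosed (convexHull ℝ (↑X' : Set (Fin d → ℝ))) :=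
    X'.finite_toSet.isClosed_convexHull ℝ
  have h := rank_le_card_isVisible hclosed hv
  rw [span_shift hsp] at h
  have hset : {y ∈ (↑X' : Set (Fin d → ℝ)) | IsVisible ℝ (convexHull ℝ (↑X' : Set (Fin d → ℝ))) v y}
      = ↑(X'.filter (fun y => IsVisible ℝ (convexHull ℝ (↑X' : Set (Fin d → ℝ))) v y)) := by
    ext y; simp
  have : FiniteDimensional ℝ (vectorSpan ℝ (↑X' : Set (Fin d → ℝ))) :=
    finiteDimensional_vectorSpan_of_finite ℝ X'.finite_toSet
  have h3 : Module.rank ℝ (vectorSpan ℝ (↑X' : Set (Fin d → ℝ))) ≤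
      ((X'.filter (fun y => IsVisible ℝ (convexHull ℝ (↑X' : Set (Fin d → ℝ))) v y)).card : Cardinal) := by
    refine h.trans_eq ?_
    rw [hset]
    exact Cardinal.mk_coe_finset
  rw [← Module.finrank_eq_rank] at h3
  exact_mod_cast h3

lemma good_new (X' : Finset (Fin d → ℝ)) {v : Fin d → ℝ}
    (hv : v ∉ convexHull ℝ (↑X' : Set (Fin d → ℝ)))
    {y : Fin d → ℝ}
    (hy : y ∈ insert v (X'.filter (fun y => IsVisible ℝ (convexHull ℝ (↑X' : Set (Fin d → ℝ))) v y)))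
    {a b : Fin d → ℝ} (ha : a ∈ X') (hb : b ∈ X') : v + y ≠ a + b := by
  classical
  intro heq
  have hmid : midpoint ℝ v y = midpoint ℝ a b := by
    rw [midpoint_eq_smul_add, midpoint_eq_smul_add, heq]
  have hmidmem : midpoint ℝ v y ∈ convexHull ℝ (↑X' : Set (Fin d → ℝ)) := by
    rw [hmid]
    exact (convex_convexHull ℝ _).segment_subset (subset_convexHull ℝ _ ha)
      (subset_convexHull ℝ _ hb) (midpoint_mem_segment a b)
  rcases Finset.mem_insert.1 hy with rfl | hy
  · rw [midpoint_self] at hmidmem; exact hv hmidmem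
  · obtain ⟨hyX, hvis⟩ := Finset.mem_filter.1 hy
    have hne : v ≠ y := by
      rintro rfl; exact hv (subset_convexHull ℝ _ hyX)
    exact hvis hmidmem (sbtw_midpoint_of_ne ℝ hne)


/-- main counting step given a finset `G` of "new offsets". -/
lemma card_step (X X' G : Finset (Fin d → ℝ)) (v : Fin d → ℝ) (hvX : v ∈ X)
    (hX' : X' ⊆ X) (hG : G ⊆ X)
    (hnew : ∀ y ∈ G, ∀ a ∈ X', ∀ b ∈ X', v + y ≠ a + b) :
    (X' + X').card + G.card ≤ ((X + X).card) := by
  classical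
  have himg : (X' + X') ∪ G.image (fun y => v + y) ⊆ X + X := by
    refine Finset.union_subset (Finset.add_subset_add hX' hX') ?_
    intro z hz
    obtain ⟨y, hy, rfl⟩ := Finset.mem_image.1 hz
    exact Finset.add_mem_add hvX (hG hy)
  have hdisj : Disjoint (X' + X') (G.image (fun y => v + y)) := by
    rw [Finset.disjoint_right]
    intro z hz hz'
    obtain ⟨y, hy, rfl⟩ := Finset.mem_image.1 hz
    obtain ⟨a, ha, b, hb, hab⟩ := Finset.mem_add.1 hz'
    exact hnew y hy a ha b hb hab.symm
  calc (X' + X').card + G.card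
      = (X' + X').card + (G.image (fun y => v + y)).card := by
        rw [Finset.card_image_of_injective _ (add_right_injective v)]
    _ = ((X' + X') ∪ G.image (fun y => v + y)).card :=
        (Finset.card_union_of_disjoint hdisj).symm
    _ ≤ (X + X).card := Finset.card_le_card himg

lemma freiman_aux (d : ℕ) : ∀ (n : ℕ) (X : Finset (Fin d → ℝ)), X.card ≤ n →
    ((finrank ℝ (vectorSpan ℝ (X : Set (Fin d → ℝ))) : ℤ) + 1) * X.card -
      (((finrank ℝ (vectorSpan ℝ (X : Set (Fin d → ℝ)))) + 1).choose 2 : ℤ)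
      ≤ ((X + X).card : ℤ) := by
  intro n
  induction n with
  | zero =>
      intro X hX
      rw [Finset.card_eq_zero.1 (Nat.le_zero.1 hX)]
      simp
  | succ n ih =>
      intro X hXn
      by_cases h1 : X.card ≤ 1
      · rcases Nat.le_one_iff_eq_zero_or_eq_one.1 h1 with h0 | h1
        · rw [Finset.card_eq_zero.1 h0]; simp
        · obtain ⟨v, rfl⟩ := Finset.card_eq_one.1 h1
          have hvs : vectorSpan ℝ ({v} : Set (Fin d → ℝ)) = ⊥ := vectorSpan_singleton ℝ v
          rw [Finset.coe_singleton, hvs, Finset.singleton_add_singleton]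
          simp
      push_neg at h1
      obtain ⟨v, hvX, hv⟩ := exists_extreme X (Finset.card_pos.1 (by omega))
      set X' : Finset (Fin d → ℝ) := X.erase v with hX'def
      have hvX' : v ∉ X' := Finset.notMem_erase v X
      have hcard' : X'.card + 1 = X.card := Finset.card_erase_add_one hvX
      have hcoe : (X : Set (Fin d → ℝ)) = insert v (X' : Set (Fin d → ℝ)) := by
        rw [hX'def, Finset.coe_erase, Set.insert_diff_singleton,
          Set.insert_eq_of_mem (show v ∈ (X : Set (Fin d → ℝ)) from hvX)]
      have hX'n : X'.card ≤ n := by omega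
      have IH := ih X' hX'n
      set r' : ℕ := finrank ℝ (vectorSpan ℝ (X' : Set (Fin d → ℝ))) with hr'def
      by_cases hsp : v ∈ affineSpan ℝ (X' : Set (Fin d → ℝ))
      · -- Case A : rank preserved
        have hvs : vectorSpan ℝ (X : Set (Fin d → ℝ)) = vectorSpan ℝ (X' : Set (Fin d → ℝ)) := by
          rw [hcoe]; exact vectorSpan_insert_eq_vectorSpan hsp
        set G : Finset (Fin d → ℝ) := insert v
          (X'.filter (fun y => IsVisible ℝ (convexHull ℝ (↑X' : Set (Fin d → ℝ))) v y)) with hGdef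
        have hGX : G ⊆ X := by
          intro y hy
          rcases Finset.mem_insert.1 hy with rfl | hy
          · exact hvX
          · exact Finset.erase_subset v X (Finset.mem_filter.1 hy).1
        have hGcard : r' + 1 ≤ G.card := by
          have := good_card X' hv hsp
          have hvfil : v ∉ X'.filter (fun y => IsVisible ℝ (convexHull ℝ (↑X' : Set (Fin d → ℝ))) v y) :=
            fun h => hvX' (Finset.mem_filter.1 h).1
          rw [hGdef, Finset.card_insert_of_notMem hvfil]
          omega
        have hstep := card_step X X' G v hvX (Finset.erase_subset v X) hGX
          (fun y hy a ha b hb => good_new X' hv hy ha hb)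
        rw [hvs, ← hr'def]
        have hc1 : (X.card : ℤ) = (X'.card : ℤ) + 1 := by exact_mod_cast hcard'.symm
        have hstep' : ((X' + X').card : ℤ) + (G.card : ℤ) ≤ ((X + X).card : ℤ) := by
          exact_mod_cast hstep
        have hG' : (r' : ℤ) + 1 ≤ (G.card : ℤ) := by exact_mod_cast hGcard
        nlinarith [IH, hstep', hG', hc1]
      · -- Case B : rank drops
        have hX'ne : X'.Nonempty := Finset.card_pos.1 (by omega)
        obtain ⟨x₀, hx₀⟩ := hX'ne
        -- rank relation
        have hlt : vectorSpan ℝ (X' : Set (Fin d → ℝ)) < vectorSpan ℝ (X : Set (Fin d → ℝ)) := by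
          refine lt_of_le_of_ne (vectorSpan_mono ℝ (by rw [hcoe]; exact Set.subset_insert _ _)) ?_
          intro heq
          have hspan : affineSpan ℝ (X' : Set (Fin d → ℝ)) = affineSpan ℝ (X : Set (Fin d → ℝ)) := by
            apply AffineSubspace.ext_of_direction_eq
            · rw [direction_affineSpan, direction_affineSpan, heq]
            · exact ⟨x₀, mem_affineSpan ℝ hx₀, mem_affineSpan ℝ (Finset.erase_subset v X hx₀)⟩
          exact hsp (hspan ▸ mem_affineSpan ℝ (by exact_mod_cast hvX))
        have : FiniteDimensional ℝ (vectorSpan ℝ (X : Set (Fin d → ℝ))) :=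
          finiteDimensional_vectorSpan_of_finite ℝ X.finite_toSet
        have hrlt : r' < finrank ℝ (vectorSpan ℝ (X : Set (Fin d → ℝ))) :=
          Submodule.finrank_lt_finrank_of_lt hlt
        have hrle : finrank ℝ (vectorSpan ℝ (X : Set (Fin d → ℝ))) ≤ r' + 1 := by
          rw [hcoe]; exact finrank_vectorSpan_insert_le_set ℝ (X' : Set (Fin d → ℝ)) v
        have hr : finrank ℝ (vectorSpan ℝ (X : Set (Fin d → ℝ))) = r' + 1 := by omega
        -- dual functional
        have hnmem : v - x₀ ∉ (affineSpan ℝ (X' : Set (Fin d → ℝ))).direction := by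
          intro hmem
          apply hsp
          have := AffineSubspace.vadd_mem_of_mem_direction hmem (mem_affineSpan ℝ hx₀)
          simpa [vadd_eq_add, sub_add_cancel] using this
        obtain ⟨ψ, hψne, hψmap⟩ :=
          Submodule.exists_dual_map_eq_bot_of_notMem hnmem inferInstance
        have hψ0 : ∀ w ∈ (affineSpan ℝ (X' : Set (Fin d → ℝ))).direction, ψ w = 0 := by
          intro w hw
          have : ψ w ∈ Submodule.map ψ (affineSpan ℝ (X' : Set (Fin d → ℝ))).direction :=
            Submodule.mem_map_of_mem hw
          rw [hψmap] at this
          simpa using this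
        have hψconst : ∀ a ∈ X', ψ a = ψ x₀ := by
          intro a ha
          have : ψ (a - x₀) = 0 := hψ0 _ (AffineSubspace.vsub_mem_direction
            (mem_affineSpan ℝ ha) (mem_affineSpan ℝ hx₀))
          rw [map_sub] at this
          linarith
        -- new sums
        have hnew : ∀ y ∈ insert v X', ∀ a ∈ X', ∀ b ∈ X', v + y ≠ a + b := by
          intro y hy a ha b hb heq
          have hvy : ψ (v + y) = ψ (a + b) := by rw [heq]
          rw [map_add, map_add, hψconst a ha, hψconst b hb] at hvy
          have hv' : ψ v = ψ x₀ + ψ (v - x₀) := by rw [map_sub]; ring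
          rcases Finset.mem_insert.1 hy with h | h
          · rw [h, hv'] at hvy
            apply hψne; linarith
          · rw [hψconst y h, hv'] at hvy
            apply hψne; linarith
        have hstep := card_step X X' (insert v X') v hvX (Finset.erase_subset v X)
          (by intro y hy; rcases Finset.mem_insert.1 hy with rfl | hy
              exacts [hvX, Finset.erase_subset v X hy]) hnew
        rw [Finset.card_insert_of_notMem hvX', hcard'] at hstep
        -- arithmetic
        rw [hr]
        have hchoose : ((r' + 1 + 1).choose 2 : ℤ) = ((r' + 1).choose 2 : ℤ) + (r' + 1 : ℤ) := by
          have : (r' + 1 + 1).choose 2 = (r' + 1).choose 1 + (r' + 1).choose 2 :=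
            Nat.choose_succ_succ (r' + 1) 1
          rw [this, Nat.choose_one_right]
          push_cast; ring
        have hc1 : (X.card : ℤ) = (X'.card : ℤ) + 1 := by exact_mod_cast hcard'.symm
        have hstep' : ((X' + X').card : ℤ) + (X.card : ℤ) ≤ ((X + X).card : ℤ) := by
          exact_mod_cast hstep
        push_cast
        nlinarith [IH, hstep', hc1, hchoose]

/-- Freĭman's lemma: a finite full-rank subset `X ⊆ ℝ^d` satisfies
`|X + X| ≥ (d+1)|X| - (d+1)d/2`. -/
theorem freiman_lemma (d : ℕ) (X : Finset (Fin d → ℝ))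
    (hfull : Module.finrank ℝ (affineSpan ℝ (X : Set (Fin d → ℝ))).direction = d) :
    ((d : ℤ) + 1) * X.card - ((d + 1).choose 2 : ℤ) ≤ ((X + X).card : ℤ) := by
  have h := freiman_aux d X.card X le_rfl
  rw [direction_affineSpan] at hfull
  rw [hfull] at h
  exact_mod_cast h
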